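/- arXiv:2508.05713 — 7 statements merged into one kernel-verified Lean document; each statement's English description precedes it below -/
import Mathlib

section
/- Suppose f satisfies the uniqueness condition. Then for every word I and every m ≥ 1, f_I has a fixed point if and only if the m-th iterate f_I^m has a fixed point. -/
/-- `x` is a fixed point of the composite partial map `f_I` determined by the word `I`:
the composite of the restrictions of `f` to the classes `X_{i_j}` (where `c` records
the class of each point) is defined at `x` and returns `x`. -/
def IsWordFixedPt {X : Type*} {k : ℕ} (f : X → X) (c : X → Fin k)
    (I : List (Fin k)) (x : X) : Prop :=
  f^[I.length] x = x ∧ ∀ j : Fin I.length, c (f^[(j : ℕ)] x) = I.get j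

/-- The uniqueness condition: every composite `f_I` over a nonempty word `I`
has at most one fixed point. -/
def UniqCond {X : Type*} {k : ℕ} (f : X → X) (c : X → Fin k) : Prop :=
  ∀ I : List (Fin k), I ≠ [] → ∀ x y : X,
    IsWordFixedPt f c I x → IsWordFixedPt f c I y → x = y

lemma len_jr {α : Type*} (I : List α) (m : ℕ) :
    (List.flatten (List.replicate m I)).length = m * I.length := by
  induction m with
  | zero => simp
  | succ n ih => simp [List.replicate_succ, ih, Nat.succ_mul, Nat.add_comm]

lemma getElem_jr {α : Type*} (I : List α) (m j : ℕ)
    (h : j < (List.flatten (List.replicate m I)).length)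
    (hL : j % I.length < I.length) :
    (List.flatten (List.replicate m I))[j] = I[j % I.length] := by
  induction m generalizing j with
  | zero => simp at h
  | succ n ih =>
    have e : (List.replicate (n+1) I).flatten = I ++ (List.replicate n I).flatten := by
      simp [List.replicate_succ]
    rw [List.getElem_of_eq e]
    rw [e] at h
    rcases lt_or_ge j I.length with hj | hj
    · rw [List.getElem_append_left hj]
      congr 1
      exact (Nat.mod_eq_of_lt hj).symm
    · have hmod : (j - I.length) % I.length = j % I.length := (Nat.mod_eq_sub_mod hj).symm
      have h' : j - I.length < (List.flatten (List.replicate n I)).length := by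
        simp only [List.length_append] at h; omega
      rw [List.getElem_append_right hj, ih _ h' (by rw [hmod]; exact hL)]
      congr 1

theorem stmt_7 {X : Type*} {k : ℕ} (f : X → X) (c : X → Fin k)
    (hpart : ∀ i : Fin k, Set.InjOn f {x | c x = i})
    (hu : UniqCond f c) (I : List (Fin k)) (hI : I ≠ []) (m : ℕ) (hm : 1 ≤ m) :
    (∃ x, IsWordFixedPt f c I x) ↔
      ∃ x, IsWordFixedPt f c (List.flatten (List.replicate m I)) x := by
  set L := I.length with hLdef
  have hL : 0 < L := List.length_pos_iff.mpr hI
  set J := List.flatten (List.replicate m I) with hJdef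
  have lenJ : J.length = m * L := len_jr I m
  have hmL : L ≤ m * L := Nat.le_mul_of_pos_left L hm
  have hJne : J ≠ [] := by
    apply List.ne_nil_of_length_pos
    rw [lenJ]; exact Nat.mul_pos hm hL
  have Jget : ∀ (j : ℕ) (hj : j < m * L),
      J[j]'(by rw [lenJ]; exact hj) = I[j % L]'(Nat.mod_lt _ hL) := by
    intro j hj
    exact getElem_jr I m j (by rw [lenJ]; exact hj) (Nat.mod_lt _ hL)
  constructor
  · rintro ⟨x, hx1, hx2⟩
    refine ⟨x, ?_, ?_⟩
    · rw [lenJ, Nat.mul_comm, Function.iterate_mul]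
      exact Function.IsFixedPt.iterate hx1 m
    · intro j
      have hj : (j : ℕ) < m * L := by have := j.2; omega
      have hiter : f^[(j : ℕ)] x = f^[(j : ℕ) % L] x := by
        conv_lhs => rw [← Nat.mod_add_div (j : ℕ) L,
          Function.iterate_add_apply]
        congr 1
        rw [Function.iterate_mul]
        exact Function.IsFixedPt.iterate hx1 _
      rw [List.get_eq_getElem, Jget (j : ℕ) hj, hiter]
      exact hx2 ⟨(j : ℕ) % L, Nat.mod_lt _ hL⟩
  · rintro ⟨x, hx⟩
    have hx1 : f^[m * L] x = x := by have := hx.1; rwa [lenJ] at this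
    have hx2 : ∀ j : ℕ, j < m * L → c (f^[j] x) = I[j % L]'(Nat.mod_lt _ hL) := by
      intro j hj
      have := hx.2 ⟨j, by rw [lenJ]; exact hj⟩
      rwa [List.get_eq_getElem, Jget j hj] at this
    set y := f^[L] x with hy
    have hycomp : f^[m * L] y = y := by
      rw [hy, ← Function.iterate_add_apply, Nat.add_comm,
        Function.iterate_add_apply, hx1]
    have hy2 : ∀ j : ℕ, j < m * L → c (f^[j] y) = I[j % L]'(Nat.mod_lt _ hL) := by
      intro j hj
      have hiter : f^[j] y = f^[j + L] x := by
        rw [hy, ← Function.iterate_add_apply]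
      rcases lt_or_ge (j + L) (m * L) with hcase | hcase
      · rw [hiter, hx2 (j + L) hcase]
        congr 1
        exact Nat.add_mod_right j L
      · set r := j + L - m * L with hr
        have hrL : r < L := by omega
        have hmod : j % L = r % L := by
          have h1 : j + L = r + m * L := by omega
          calc j % L = (j + L) % L := (Nat.add_mod_right j L).symm
            _ = (r + m * L) % L := by rw [h1]
            _ = r % L := Nat.add_mul_mod_self_right r m L
        have hiter2 : f^[j + L] x = f^[r] x := by
          have : j + L = r + m * L := by omega
          rw [this, Function.iterate_add_apply, hx1]
        rw [hiter, hiter2, hx2 r (lt_of_lt_of_le hrL hmL)]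
        congr 1
        exact hmod.symm
    have hyJ : IsWordFixedPt f c J y := by
      refine ⟨by rw [lenJ]; exact hycomp, ?_⟩
      intro j
      have hj : (j : ℕ) < m * L := by have := j.2; omega
      rw [List.get_eq_getElem, Jget (j : ℕ) hj]
      exact hy2 (j : ℕ) hj
    have hxy : x = y := hu J hJne x y hx hyJ
    refine ⟨x, hxy.symm, ?_⟩
    intro j
    have hj : (j : ℕ) < L := j.2
    have := hx2 (j : ℕ) (lt_of_lt_of_le hj hmL)
    rw [this, List.get_eq_getElem]
    congr 1
    exact Nat.mod_eq_of_lt hj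
end

section
/- If f satisfies the uniqueness condition, x is a periodic point with minimal period m, and I = (i₁,…,i_m) is the word with f^{j−1}(x) ∈ X_{i_j}, then I is aperiodic: no proper cyclic rotation of I equals I. -/
theorem stmt_8 {X : Type*} {k : ℕ} (f : X → X) (c : X → Fin k)
    (hpart : ∀ i : Fin k, Set.InjOn f {x | c x = i})
    (hu : UniqCond f c) (x : X) (m : ℕ) (hm : 0 < m)
    (hfix : f^[m] x = x) (hmin : ∀ j, 0 < j → j < m → f^[j] x ≠ x)
    (I : List (Fin k)) (hlen : I.length = m)
    (hI : ∀ j : Fin I.length, I.get j = c (f^[(j : ℕ)] x)) :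
    ∀ j, 0 < j → j < m → I.rotate j ≠ I := by
  intro j hj hjm hrot
  have hper : Function.IsPeriodicPt f m x := hfix
  have h1 : IsWordFixedPt f c I x := by
    refine ⟨by rw [hlen]; exact hfix, fun j' => (hI j').symm⟩
  have h2 : IsWordFixedPt f c (I.rotate j) (f^[j] x) := by
    constructor
    · rw [List.length_rotate, hlen, ← Function.iterate_add_apply,
        Nat.add_comm, Function.iterate_add_apply, hfix]
    · intro j'
      rw [← Function.iterate_add_apply, List.get_rotate, hI]
      congr 1
      simp only [hlen]
      exact (hper.iterate_mod_apply _).symm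
  rw [hrot] at h2
  have hne : I ≠ [] := by
    intro h; rw [h] at hlen; simp at hlen; omega
  exact hmin j hj hjm (hu I hne _ _ h2 h1)
end

section
/- If n is a periodic point of the Collatz map with minimal period m, then the m-tuple of parities ((−1)^n, (−1)^{f(n)}, …, (−1)^{f^{m−1}(n)}) is not fixed by any nontrivial cyclic rotation. -/
/-- The Collatz map on the positive integers (value at `0` irrelevant). -/
def collatz (n : ℕ) : ℕ := if Odd n then 3 * n + 1 else n / 2

lemma collatz_odd {x : ℕ} (h : Odd x) : collatz x = 3 * x + 1 := by
  simp [collatz, h]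

lemma collatz_even {x : ℕ} (h : ¬ Odd x) : 2 * collatz x = x := by
  rw [collatz, if_neg h]
  rw [Nat.not_odd_iff_even] at h
  obtain ⟨c, rfl⟩ := h
  omega

lemma neg_one_pow_inj {a b : ℕ} (h : ((-1 : ℤ)) ^ a = (-1) ^ b) :
    (Odd a ↔ Odd b) := by
  rcases Nat.even_or_odd a with ha | ha <;> rcases Nat.even_or_odd b with hb | hb
  · exact iff_of_false (Nat.not_odd_iff_even.2 ha) (Nat.not_odd_iff_even.2 hb)
  · rw [ha.neg_one_pow, hb.neg_one_pow] at h; norm_num at h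
  · rw [ha.neg_one_pow, hb.neg_one_pow] at h; norm_num at h
  · exact iff_of_true ha hb

lemma key (n j m : ℕ) (hfix : collatz^[m] n = n)
    (hpar : ∀ i, (Odd (collatz^[i + j] n) ↔ Odd (collatz^[i] n))) :
    ∀ i, ∃ o e, o + e = i ∧
      (2 : ℤ) ^ e * ((collatz^[i + j] n : ℤ) - collatz^[i] n)
        = 3 ^ o * ((collatz^[j] n : ℤ) - n) := by
  intro i
  induction i with
  | zero => exact ⟨0, 0, rfl, by simp⟩
  | succ i ih =>
    obtain ⟨o, e, hoe, heq⟩ := ih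
    have hsy : collatz^[i + 1 + j] n = collatz (collatz^[i + j] n) := by
      have : i + 1 + j = (i + j) + 1 := by ring
      rw [this, Function.iterate_succ_apply']
    have hsx : collatz^[i + 1] n = collatz (collatz^[i] n) := by
      rw [Function.iterate_succ_apply']
    by_cases hox : Odd (collatz^[i] n)
    · have hoy : Odd (collatz^[i + j] n) := (hpar i).mpr hox
      refine ⟨o + 1, e, by omega, ?_⟩
      rw [hsy, hsx, collatz_odd hoy, collatz_odd hox]
      push_cast
      ring_nf
      ring_nf at heq
      linarith
    · have hoy : ¬ Odd (collatz^[i + j] n) := fun h => hox ((hpar i).mp h)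
      refine ⟨o, e + 1, by omega, ?_⟩
      rw [hsy, hsx]
      have h1 := collatz_even hoy
      have h2 := collatz_even hox
      have h1' : (2 : ℤ) * (collatz (collatz^[i + j] n) : ℤ) = collatz^[i + j] n := by
        exact_mod_cast congrArg (Nat.cast : ℕ → ℤ) h1
      have h2' : (2 : ℤ) * (collatz (collatz^[i] n) : ℤ) = collatz^[i] n := by
        exact_mod_cast congrArg (Nat.cast : ℕ → ℤ) h2
      calc (2 : ℤ) ^ (e + 1) * ((collatz (collatz^[i + j] n) : ℤ) - collatz (collatz^[i] n))
          = 2 ^ e * ((2 * (collatz (collatz^[i + j] n) : ℤ)) - 2 * collatz (collatz^[i] n)) := by ring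
        _ = 2 ^ e * ((collatz^[i + j] n : ℤ) - collatz^[i] n) := by rw [h1', h2']
        _ = 3 ^ o * ((collatz^[j] n : ℤ) - n) := heq

theorem stmt_9 (n m : ℕ) (hn : 1 ≤ n) (hm : 0 < m)
    (hfix : collatz^[m] n = n)
    (hmin : ∀ j, 0 < j → j < m → collatz^[j] n ≠ n) :
    ∀ j, 0 < j → j < m →
      ((List.range m).map fun i => ((-1 : ℤ)) ^ (collatz^[i] n)).rotate j ≠
        (List.range m).map fun i => ((-1 : ℤ)) ^ (collatz^[i] n) := by
  intro j hj hjm hrot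
  have hper : Function.IsPeriodicPt collatz m n := hfix
  have hmod : ∀ k, collatz^[k] n = collatz^[k % m] n :=
    fun k => (hper.iterate_mod_apply k).symm
  set l := (List.range m).map fun i => ((-1 : ℤ)) ^ (collatz^[i] n) with hl
  have hlen : l.length = m := by simp [hl]
  -- element-wise equality from the rotation
  have helem : ∀ i, i < m →
      ((-1 : ℤ)) ^ (collatz^[(i + j) % m] n) = (-1) ^ (collatz^[i] n) := by
    intro i hi
    have hi' : i < (l.rotate j).length := by simp [hlen, hi]
    have e0 : (l.rotate j)[i]'hi' = l[i]'(by simp [hlen, hi]) := by simp [hrot]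
    have e1 := (List.getElem_rotate l j i hi').symm.trans e0
    simp only [hlen] at e1
    simpa [hl, hlen, hi, Nat.mod_lt _ hm] using e1
  have hpar : ∀ i, (Odd (collatz^[i + j] n) ↔ Odd (collatz^[i] n)) := by
    intro i
    have h1 : collatz^[i + j] n = collatz^[(i % m + j) % m] n := by
      rw [hmod (i + j), ← Nat.mod_add_mod]
    have h2 : collatz^[i] n = collatz^[i % m] n := hmod i
    rw [h1, h2]
    exact neg_one_pow_inj (helem (i % m) (Nat.mod_lt _ hm))
  obtain ⟨o, e, hoe, heq⟩ := key n j m hfix hpar m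
  have hmj : collatz^[m + j] n = collatz^[j] n := by
    rw [Nat.add_comm, Function.iterate_add_apply, hfix]
  rw [hmj, hfix] at heq
  -- heq : 2^e * (f^j n - n) = 3^o * (f^j n - n)
  have hne : (2 : ℤ) ^ e ≠ 3 ^ o := by
    intro h
    have h' : (2 : ℕ) ^ e = 3 ^ o := by exact_mod_cast h
    rcases Nat.eq_zero_or_pos o with ho | ho
    · subst ho
      simp at h'
      have : e = 0 := by
        by_contra he
        have := Nat.one_lt_two_pow (n := e) (by omega)
        omega
      omega
    · have h3 : (3 : ℕ) ∣ 2 ^ e := h' ▸ dvd_pow_self 3 (by omega)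
      have := (Nat.prime_three.dvd_of_dvd_pow h3)
      omega
  have : (collatz^[j] n : ℤ) - n = 0 := by
    by_contra h
    exact hne (mul_right_cancel₀ h heq)
  have : collatz^[j] n = n := by
    have := sub_eq_zero.mp this
    exact_mod_cast this
  exact hmin j hj hjm this
end

section
/- Assume f satisfies the uniqueness condition and T_I ≠ 0 for a word I. If T_I has a nonzero fixed vector a, then f_I has a fixed point x, and the set of all fixed vectors of T_I equals ℂ·e_x. -/
set_option linter.unusedSectionVars false
set_option maxHeartbeats 1000000

open scoped InnerProductSpace

section Aux
variable {X : Type*} {k : ℕ}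

/-- Recursive form of the compatibility predicate. -/
def CompatR (f : X → X) (c : X → Fin k) : List (Fin k) → X → Prop
  | [], _ => True
  | i :: J, x => c x = i ∧ CompatR f c J (f x)

variable (f : X → X) (c : X → Fin k)

lemma compatR_iff (I : List (Fin k)) (x : X) :
    CompatR f c I x ↔ ∀ j : Fin I.length, c (f^[(j : ℕ)] x) = I.get j := by
  induction I generalizing x with
  | nil => simp only [CompatR, true_iff]; exact fun j => j.elim0
  | cons i J ih =>
    simp only [CompatR, ih]
    constructor
    · rintro ⟨h0, h1⟩ j
      refine Fin.cases ?_ ?_ j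
      · simpa using h0
      · intro j'
        simpa [Function.iterate_succ_apply] using h1 j'
    · intro h
      refine ⟨by simpa using h ⟨0, Nat.succ_pos _⟩, fun j' => ?_⟩
      simpa [Function.iterate_succ_apply] using h j'.succ

lemma isWordFixedPt_iff (I : List (Fin k)) (x : X) :
    IsWordFixedPt f c I x ↔ f^[I.length] x = x ∧ CompatR f c I x := by
  rw [IsWordFixedPt, compatR_iff]

lemma compatR_append (I₁ I₂ : List (Fin k)) (x : X) :
    CompatR f c (I₁ ++ I₂) x ↔ CompatR f c I₁ x ∧ CompatR f c I₂ (f^[I₁.length] x) := by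
  induction I₁ generalizing x with
  | nil => simp [CompatR]
  | cons i J ih => simp [CompatR, ih, Function.iterate_succ_apply, and_assoc]

lemma compatR_inj (hpart : ∀ i : Fin k, Set.InjOn f {x | c x = i})
    (I : List (Fin k)) : ∀ x y : X, CompatR f c I x → CompatR f c I y →
    f^[I.length] x = f^[I.length] y → x = y := by
  induction I with
  | nil => intro x y _ _ h; simpa using h
  | cons i J ih =>
    rintro x y ⟨hx0, hx1⟩ ⟨hy0, hy1⟩ h
    have : f x = f y := ih (f x) (f y) hx1 hy1 (by
      simpa [Function.iterate_succ_apply] using h)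
    exact hpart i (by exact hx0) (by rw [Set.mem_setOf_eq, hy0]) this

end Aux

section Op
variable {X : Type*} {k : ℕ} (f : X → X) (c : X → Fin k)
  {H : Type*} [NormedAddCommGroup H] [InnerProductSpace ℂ H] [CompleteSpace H]
  (e : HilbertBasis X ℂ H) (T : Fin k → H →L[ℂ] H)

/-- The composite operator determined by a word. -/
def TI (T : Fin k → H →L[ℂ] H) (I : List (Fin k)) : H →L[ℂ] H :=
  I.foldl (fun A i => (T i).comp A) (ContinuousLinearMap.id ℂ H)

lemma foldl_comp (I : List (Fin k)) (A : H →L[ℂ] H) :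
    I.foldl (fun A i => (T i).comp A) A = (TI T I).comp A := by
  induction I generalizing A with
  | nil => simp [TI]
  | cons i J ih =>
    rw [List.foldl_cons, ih]
    conv_rhs => rw [TI, List.foldl_cons, ih]
    simp [ContinuousLinearMap.comp_assoc]

lemma TI_cons (i : Fin k) (J : List (Fin k)) :
    TI T (i :: J) = (TI T J).comp (T i) := by
  rw [TI, List.foldl_cons, foldl_comp]
  simp

lemma coeff_ext (v w : H) (h : ∀ z, ⟪e z, v⟫_ℂ = ⟪e z, w⟫_ℂ) : v = w := by
  apply e.repr.injective
  apply lp.ext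
  funext z
  rw [e.repr_apply_apply, e.repr_apply_apply]
  exact h z

lemma eorth_self (z : X) : ⟪e z, e z⟫_ℂ = 1 := by
  rw [@inner_self_eq_norm_sq_to_K ℂ]
  simp [e.orthonormal.1 z]

lemma eorth_ne {z y : X} (h : z ≠ y) : ⟪e z, e y⟫_ℂ = 0 :=
  e.orthonormal.2 h

variable (hT : ∀ i x, T i (e x) = if c x = i then e (f x) else 0)
include hT

lemma TI_apply_of {I : List (Fin k)} {x : X} (h : CompatR f c I x) :
    TI T I (e x) = e (f^[I.length] x) := by
  induction I generalizing x with
  | nil => simp [TI]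
  | cons i J ih =>
    obtain ⟨h0, h1⟩ := h
    rw [TI_cons, ContinuousLinearMap.comp_apply, hT, if_pos h0, ih h1,
      List.length_cons, Function.iterate_succ_apply]

lemma TI_apply_not {I : List (Fin k)} {x : X} (h : ¬ CompatR f c I x) :
    TI T I (e x) = 0 := by
  induction I generalizing x with
  | nil => exact absurd trivial h
  | cons i J ih =>
    rw [TI_cons, ContinuousLinearMap.comp_apply, hT]
    by_cases h0 : c x = i
    · rw [if_pos h0]
      exact ih (fun hc => h ⟨h0, hc⟩)
    · rw [if_neg h0, map_zero]

lemma adj_apply_of (hpart : ∀ i : Fin k, Set.InjOn f {x | c x = i})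
    {I : List (Fin k)} {x : X} (hx : CompatR f c I x) :
    ContinuousLinearMap.adjoint (TI T I) (e (f^[I.length] x)) = e x := by
  apply coeff_ext e
  intro z
  rw [ContinuousLinearMap.adjoint_inner_right]
  by_cases hz : CompatR f c I z
  · rw [TI_apply_of f c e T hT hz]
    by_cases hzx : z = x
    · subst hzx; rw [eorth_self, eorth_self]
    · rw [eorth_ne e hzx,
        eorth_ne e (fun hgz => hzx (compatR_inj f c hpart I z x hz hx hgz))]
  · rw [TI_apply_not f c e T hT hz, inner_zero_left,
      eorth_ne e (fun h => hz (by rw [h]; exact hx))]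

lemma adj_apply_none {I : List (Fin k)} {y : X}
    (hy : ¬ ∃ x, CompatR f c I x ∧ f^[I.length] x = y) :
    ContinuousLinearMap.adjoint (TI T I) (e y) = 0 := by
  apply coeff_ext e
  intro z
  rw [ContinuousLinearMap.adjoint_inner_right, inner_zero_right]
  by_cases hz : CompatR f c I z
  · rw [TI_apply_of f c e T hT hz]
    exact eorth_ne e (fun h => hy ⟨z, hz, h⟩)
  · rw [TI_apply_not f c e T hT hz, inner_zero_left]

lemma coeff_shift (hpart : ∀ i : Fin k, Set.InjOn f {x | c x = i})
    {I : List (Fin k)} (a : H) (hfa : TI T I a = a) {x : X} (hx : CompatR f c I x) :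
    ⟪e (f^[I.length] x), a⟫_ℂ = ⟪e x, a⟫_ℂ := by
  conv_lhs => rw [← hfa]
  rw [← ContinuousLinearMap.adjoint_inner_left, adj_apply_of f c e T hT hpart hx]

lemma coeff_zero {I : List (Fin k)} (a : H) (hfa : TI T I a = a) {y : X}
    (hy : ¬ ∃ x, CompatR f c I x ∧ f^[I.length] x = y) :
    ⟪e y, a⟫_ℂ = 0 := by
  conv_lhs => rw [← hfa]
  rw [← ContinuousLinearMap.adjoint_inner_left, adj_apply_none f c e T hT hy,
    inner_zero_left]

/-- Key lemma: any index whose coefficient in a fixed vector is nonzero is a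
word fixed point. -/
lemma key_s13 (hpart : ∀ i : Fin k, Set.InjOn f {x | c x = i}) (hu : UniqCond f c)
    {I : List (Fin k)} (hI : I ≠ []) (a : H) (hfa : TI T I a = a)
    {y : X} (hy : ⟪e y, a⟫_ℂ ≠ 0) : IsWordFixedPt f c I y := by
  have step : ∀ z : X, ⟪e z, a⟫_ℂ = ⟪e y, a⟫_ℂ →
      ∃ x, CompatR f c I x ∧ f^[I.length] x = z ∧ ⟪e x, a⟫_ℂ = ⟪e y, a⟫_ℂ := by
    intro z hz
    have hex : ∃ x, CompatR f c I x ∧ f^[I.length] x = z := by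
      by_contra h
      exact hy (by rw [← hz]; exact coeff_zero f c e T hT a hfa h)
    obtain ⟨x, hx, hgx⟩ := hex
    exact ⟨x, hx, hgx, by
      rw [← coeff_shift f c e T hT hpart a hfa hx, hgx, hz]⟩
  choose F hF1 hF2 hF3 using step
  set Q : X → Prop := fun z => ⟪e z, a⟫_ℂ = ⟪e y, a⟫_ℂ with hQ
  let s : {z // Q z} → {z // Q z} := fun p => ⟨F p.1 p.2, hF3 p.1 p.2⟩
  let u : ℕ → X := fun n => (s^[n] ⟨y, rfl⟩).1
  have hu0 : u 0 = y := rfl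
  have huQ : ∀ n, ⟪e (u n), a⟫_ℂ = ⟪e y, a⟫_ℂ := fun n => (s^[n] ⟨y, rfl⟩).2
  have hus : ∀ n, CompatR f c I (u (n+1)) ∧ f^[I.length] (u (n+1)) = u n := by
    intro n
    have hrec : s^[n+1] (⟨y, rfl⟩ : {z // Q z}) = s (s^[n] ⟨y, rfl⟩) :=
      Function.iterate_succ_apply' s n _
    constructor
    · show CompatR f c I (s^[n+1] (⟨y, rfl⟩ : {z // Q z})).1
      rw [hrec]
      exact hF1 _ _
    · show f^[I.length] (s^[n+1] (⟨y, rfl⟩ : {z // Q z})).1 = u n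
      rw [hrec]
      exact hF2 _ _
  -- finiteness of the level set
  have hfin : {z : X | Q z}.Finite := by
    have hmem := lp.memℓp (e.repr a)
    rw [memℓp_gen_iff (by norm_num)] at hmem
    have hpos : (0:ℝ) < ‖⟪e y, a⟫_ℂ‖ ^ (2 : ENNReal).toReal :=
      Real.rpow_pos_of_pos (norm_pos_iff.mpr hy) _
    have hev := hmem.tendsto_cofinite_zero.eventually (gt_mem_nhds hpos)
    rw [Filter.eventually_cofinite] at hev
    apply hev.subset
    intro z hz
    simp only [Set.mem_setOf_eq] at hz ⊢
    rw [not_lt, e.repr_apply_apply, hz]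
  -- pigeonhole
  obtain ⟨m₁, -, m₂, -, hne, hmap⟩ :=
    Set.infinite_univ.exists_ne_map_eq_of_mapsTo (f := u) (fun n _ => huQ n) hfin
  obtain ⟨n₁, n₂, hlt, hequ⟩ : ∃ n₁ n₂, n₁ < n₂ ∧ u n₁ = u n₂ := by
    rcases hne.lt_or_gt with h | h
    exacts [⟨_, _, h, hmap⟩, ⟨_, _, h, hmap.symm⟩]
  set p := n₂ - n₁ with hpdef
  have hp : 0 < p := Nat.sub_pos_of_lt hlt
  have hgd : ∀ j d, f^[d * I.length] (u (j + d)) = u j := by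
    intro j d
    induction d with
    | zero => simp
    | succ d ih =>
      rw [Nat.succ_mul, Function.iterate_add_apply,
        show j + (d+1) = (j+d)+1 from rfl, (hus (j+d)).2, ih]
  have hperiod : ∀ j, j ≤ n₁ → u j = u (j + p) := by
    intro j hj
    have h1 := hgd j (n₁ - j)
    have h2 := hgd (j + p) (n₁ - j)
    rw [show j + (n₁ - j) = n₁ from by omega] at h1
    rw [show j + p + (n₁ - j) = n₂ from by omega, ← hequ] at h2
    rw [← h1, ← h2]
  have h0p : u 0 = u p := by simpa using hperiod 0 (Nat.zero_le _)
  have h1p : u 1 = u (1 + p) := by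
    refine compatR_inj f c hpart I _ _ (hus 0).1 ?_ ?_
    · rw [show 1 + p = p + 1 from by omega]
      exact (hus p).1
    · rw [(hus 0).2, show 1 + p = p + 1 from by omega, (hus p).2, ← h0p]
  set J : List (Fin k) := (List.replicate p I).flatten with hJ
  have hJlen : J.length = p * I.length := by
    simp [hJ, List.length_flatten, List.map_replicate, List.sum_replicate, smul_eq_mul]
  have hJcompat : ∀ q j, CompatR f c (List.replicate q I).flatten (u (j + q)) := by
    intro q
    induction q with
    | zero => intro j; simp [CompatR]
    | succ q ih =>
      intro j
      rw [List.replicate_succ, List.flatten_cons, compatR_append]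
      refine ⟨(hus (j + q)).1, ?_⟩
      show CompatR f c (List.replicate q I).flatten (f^[I.length] (u ((j + q) + 1)))
      rw [(hus (j + q)).2]
      exact ih j
  have hJfix : ∀ j, f^[J.length] (u (j + p)) = u j := by
    intro j; rw [hJlen]; exact hgd j p
  have hJne : J ≠ [] := by
    have hlp : 0 < J.length := by
      rw [hJlen]; exact Nat.mul_pos hp (List.length_pos_iff.mpr hI)
    intro h
    rw [h] at hlp
    simp at hlp
  have wp : IsWordFixedPt f c J (u p) := by
    rw [isWordFixedPt_iff]
    constructor
    · have := hJfix 0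
      rw [zero_add] at this
      rw [this, ← h0p]
    · have := hJcompat p 0
      rwa [zero_add] at this
  have wp1 : IsWordFixedPt f c J (u 1) := by
    rw [isWordFixedPt_iff]
    constructor
    · have := hJfix 1
      rwa [← h1p] at this
    · have := hJcompat p 1
      rwa [← h1p] at this
  have heq01 : u p = u 1 := hu J hJne (u p) (u 1) wp wp1
  have hy1 : u 1 = y := by rw [← heq01, ← h0p, hu0]
  rw [isWordFixedPt_iff]
  constructor
  · rw [← hy1, (hus 0).2, hu0]
    exact hy1.symm
  · rw [← hy1]
    exact (hus 0).1

end Op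

theorem stmt_13 {X : Type*} [Countable X] {k : ℕ} (f : X → X) (c : X → Fin k)
    (hpart : ∀ i : Fin k, Set.InjOn f {x | c x = i})
    (hu : UniqCond f c)
    {H : Type*} [NormedAddCommGroup H] [InnerProductSpace ℂ H] [CompleteSpace H]
    (e : HilbertBasis X ℂ H) (T : Fin k → H →L[ℂ] H)
    (hT : ∀ i x, T i (e x) = if c x = i then e (f x) else 0)
    (I : List (Fin k)) (hI : I ≠ [])
    (hTI : I.foldl (fun (A : H →L[ℂ] H) i => (T i).comp A) (ContinuousLinearMap.id ℂ H) ≠ 0)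
    (a : H) (ha : a ≠ 0)
    (hfix : I.foldl (fun (A : H →L[ℂ] H) i => (T i).comp A) (ContinuousLinearMap.id ℂ H) a = a) :
    ∃ x : X, IsWordFixedPt f c I x ∧
      {v : H | I.foldl (fun (A : H →L[ℂ] H) i => (T i).comp A) (ContinuousLinearMap.id ℂ H) v = v}
        = {v : H | ∃ α : ℂ, v = α • (e x : H)} := by
  have hfix' : TI T I a = a := hfix
  -- find a nonzero coefficient
  have hco : ∃ y, ⟪e y, a⟫_ℂ ≠ 0 := by
    by_contra h
    push_neg at h
    exact ha (coeff_ext e a 0 (fun z => by rw [h z, inner_zero_right]))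
  obtain ⟨y₀, hy₀⟩ := hco
  have hx : IsWordFixedPt f c I y₀ := key_s13 f c e T hT hpart hu hI a hfix' hy₀
  refine ⟨y₀, hx, ?_⟩
  have hxc : CompatR f c I y₀ := ((isWordFixedPt_iff f c I y₀).mp hx).2
  ext v
  simp only [Set.mem_setOf_eq]
  constructor
  · intro hv
    have hv' : TI T I v = v := hv
    refine ⟨⟪e y₀, v⟫_ℂ, ?_⟩
    apply coeff_ext e
    intro z
    by_cases hz : z = y₀
    · subst hz
      rw [inner_smul_right, eorth_self, mul_one]
    · have hz0 : ⟪e z, v⟫_ℂ = 0 := by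
        by_contra h0
        exact hz (hu I hI z y₀ (key_s13 f c e T hT hpart hu hI v hv' h0) hx)
      rw [hz0, inner_smul_right, eorth_ne e hz, mul_zero]
  · rintro ⟨α, rfl⟩
    show TI T I (α • e y₀) = α • e y₀
    rw [map_smul, TI_apply_of f c e T hT hxc, hx.1]
end

section
/- The qx+d function satisfies the totally uniqueness condition: the map n ↦ (parity of f^{j−1}(n))_{j∈ℕ} from ℕ≥1 to {1,2}^ℕ is injective. That is, if two positive integers m, n satisfy that f^j(m) and f^j(n) have the same parity for all j ≥ 0, then m = n. -/
/-- The `qx+d` function. -/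
def fqd (q d n : ℕ) : ℕ := if Odd n then q * n + d else n / 2

lemma fqd_key (q d : ℕ) (hq : Odd q) (hd : Odd d) :
    ∀ k m n : ℕ,
      (∀ j : ℕ, Odd ((fqd q d)^[j] m) ↔ Odd ((fqd q d)^[j] n)) →
      m ≡ n [MOD 2 ^ k] := by
  intro k
  induction k with
  | zero => intro m n _; simp [Nat.ModEq, Nat.mod_one]
  | succ k ih =>
    intro m n h
    have h0 := h 0
    simp only [Function.iterate_zero, id_eq] at h0
    by_cases hm : Odd m
    · have hn : Odd n := h0.mp hm
      -- f m = q*m + d, even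
      have hfm : fqd q d m = q * m + d := by simp [fqd, hm]
      have hfn : fqd q d n = q * n + d := by simp [fqd, hn]
      have hem : ¬ Odd (q * m + d) := by
        simp only [Nat.not_odd_iff_even]
        exact (hq.mul hm).add_odd hd
      have hen : ¬ Odd (q * n + d) := by
        simp only [Nat.not_odd_iff_even]
        exact (hq.mul hn).add_odd hd
      have hffm : (fqd q d)^[2] m = (q * m + d) / 2 := by
        show fqd q d (fqd q d m) = _
        rw [hfm]; simp [fqd, hem]
      have hffn : (fqd q d)^[2] n = (q * n + d) / 2 := by
        show fqd q d (fqd q d n) = _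
        rw [hfn]; simp [fqd, hen]
      have h2 : ∀ j : ℕ, Odd ((fqd q d)^[j] ((fqd q d)^[2] m)) ↔
          Odd ((fqd q d)^[j] ((fqd q d)^[2] n)) := by
        intro j
        rw [← Function.iterate_add_apply, ← Function.iterate_add_apply]
        exact h (j + 2)
      have := ih _ _ h2
      rw [hffm, hffn] at this
      have h2eq : (2 : ℕ) * ((q * m + d) / 2) = q * m + d :=
        Nat.two_mul_div_two_of_even (Nat.not_odd_iff_even.mp hem)
      have h2eq' : (2 : ℕ) * ((q * n + d) / 2) = q * n + d :=
        Nat.two_mul_div_two_of_even (Nat.not_odd_iff_even.mp hen)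
      have hmul : q * m + d ≡ q * n + d [MOD 2 ^ (k + 1)] := by
        have := this.mul_left' (c := 2)
        rwa [h2eq, h2eq', ← pow_succ'] at this
      have hqm : q * m ≡ q * n [MOD 2 ^ (k + 1)] :=
        Nat.ModEq.add_right_cancel' d hmul
      exact Nat.ModEq.cancel_left_of_coprime
        ((Nat.coprime_two_left.mpr hq).pow_left (k + 1)) hqm
    · have hn : ¬ Odd n := fun hn => hm (h0.mpr hn)
      have hfm : fqd q d m = m / 2 := by simp [fqd, hm]
      have hfn : fqd q d n = n / 2 := by simp [fqd, hn]
      have h1 : ∀ j : ℕ, Odd ((fqd q d)^[j] (fqd q d m)) ↔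
          Odd ((fqd q d)^[j] (fqd q d n)) := by
        intro j
        rw [← Function.iterate_succ_apply, ← Function.iterate_succ_apply]
        exact h (j + 1)
      have := ih _ _ h1
      rw [hfm, hfn] at this
      have h2eq : (2 : ℕ) * (m / 2) = m :=
        Nat.two_mul_div_two_of_even (Nat.not_odd_iff_even.mp hm)
      have h2eq' : (2 : ℕ) * (n / 2) = n :=
        Nat.two_mul_div_two_of_even (Nat.not_odd_iff_even.mp hn)
      have := this.mul_left' (c := 2)
      rwa [h2eq, h2eq', ← pow_succ'] at this

theorem stmt_14 (q d : ℕ) (hq : Odd q) (hd : Odd d) :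
    ∀ m n : ℕ, 1 ≤ m → 1 ≤ n →
      (∀ j : ℕ, Odd ((fqd q d)^[j] m) ↔ Odd ((fqd q d)^[j] n)) → m = n := by
  intro m n _ _ h
  have key := fqd_key q d hq hd (max m n + 1) m n h
  have hbig : max m n < 2 ^ (max m n + 1) :=
    lt_of_lt_of_le (Nat.lt_two_pow_self (n := _)) (Nat.pow_le_pow_right (by norm_num) (Nat.le_succ _))
  have hm : m < 2 ^ (max m n + 1) := lt_of_le_of_lt (le_max_left m n) hbig
  have hn : n < 2 ^ (max m n + 1) := lt_of_le_of_lt (le_max_right m n) hbig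
  have := key
  rwa [Nat.ModEq, Nat.mod_eq_of_lt hm, Nat.mod_eq_of_lt hn] at this
end

section
/- For every f-invariant set K ⊆ X, the closed subspace H_K = closure of span{e_x : x ∈ K} is a reducing subspace for the C*-algebra generated by T₁,…,T_k (i.e., it is invariant under each Tᵢ and Tᵢ*), and the map K ↦ H_K is injective and order-preserving. -/
open scoped ComplexConjugate

local notation "⟪" x ", " y "⟫" => @inner ℂ _ _ x y

private lemma hb_ext {X : Type*} {H : Type*} [NormedAddCommGroup H]
    [InnerProductSpace ℂ H] [CompleteSpace H] (e : HilbertBasis X ℂ H)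
    {v w : H} (h : ∀ x, ⟪e x, v⟫ = ⟪e x, w⟫) : v = w := by
  apply e.repr.injective
  ext x
  simpa [e.repr_apply_apply] using h x

private lemma maps_closure {X : Type*} {H : Type*} [NormedAddCommGroup H]
    [InnerProductSpace ℂ H] [CompleteSpace H] (e : HilbertBasis X ℂ H)
    (K : Set X) (A : H →L[ℂ] H)
    (h : ∀ x ∈ K, A (e x) ∈ (Submodule.span ℂ (⇑e '' K)).topologicalClosure)
    {v : H} (hv : v ∈ (Submodule.span ℂ (⇑e '' K)).topologicalClosure) :
    A v ∈ (Submodule.span ℂ (⇑e '' K)).topologicalClosure := by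
  set S := Submodule.span ℂ (⇑e '' K) with hS
  set M := S.topologicalClosure with hM
  have hAS : ∀ w ∈ S, A w ∈ M := by
    intro w hw
    have : A w ∈ S.map (A : H →ₗ[ℂ] H) := Submodule.mem_map_of_mem hw
    rw [hS, Submodule.map_span] at this
    refine Submodule.span_le.mpr ?_ this
    rintro _ ⟨_, ⟨x, hx, rfl⟩, rfl⟩
    exact h x hx
  have hclosed : IsClosed (M : Set H) := Submodule.isClosed_topologicalClosure S
  have hv' : v ∈ closure (S : Set H) := hv
  have : A v ∈ closure (A '' (S : Set H)) :=
    (A.continuous.continuousWithinAt.mem_closure_image hv')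
  refine hclosed.closure_subset_iff.mpr ?_ this
  rintro _ ⟨w, hw, rfl⟩
  exact hAS w hw

theorem stmt_16 {X : Type*} [Countable X] {k : ℕ} (f : X → X) (c : X → Fin k)
    (hpart : ∀ i : Fin k, Set.InjOn f {x | c x = i})
    {H : Type*} [NormedAddCommGroup H] [InnerProductSpace ℂ H] [CompleteSpace H]
    (e : HilbertBasis X ℂ H) (T : Fin k → H →L[ℂ] H)
    (hT : ∀ i x, T i (e x) = if c x = i then e (f x) else 0) :
    (∀ K : Set X, f '' K ⊆ K → f ⁻¹' K ⊆ K → ∀ i : Fin k,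
      ∀ v ∈ (Submodule.span ℂ (⇑e '' K)).topologicalClosure,
        T i v ∈ (Submodule.span ℂ (⇑e '' K)).topologicalClosure ∧
        ContinuousLinearMap.adjoint (T i) v ∈ (Submodule.span ℂ (⇑e '' K)).topologicalClosure) ∧
    (∀ K K' : Set X, f '' K ⊆ K → f ⁻¹' K ⊆ K → f '' K' ⊆ K' → f ⁻¹' K' ⊆ K' →
      (Submodule.span ℂ (⇑e '' K)).topologicalClosure =
        (Submodule.span ℂ (⇑e '' K')).topologicalClosure → K = K') ∧
    (∀ K K' : Set X, K ⊆ K' →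
      (Submodule.span ℂ (⇑e '' K)).topologicalClosure ≤
        (Submodule.span ℂ (⇑e '' K')).topologicalClosure) := by
  classical
  have horth := e.orthonormal
  have hinner : ∀ x y : X, ⟪e x, e y⟫ = if x = y then 1 else 0 :=
    orthonormal_iff_ite.mp horth
  have hmem : ∀ (K : Set X) (x : X), x ∈ K →
      e x ∈ (Submodule.span ℂ (⇑e '' K)).topologicalClosure := fun K x hx =>
    Submodule.le_topologicalClosure _ (Submodule.subset_span ⟨x, hx, rfl⟩)
  -- adjoint formula
  have hadj : ∀ (i : Fin k) (y : X),
      ContinuousLinearMap.adjoint (T i) (e y) =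
        if h : ∃ z, c z = i ∧ f z = y then e h.choose else 0 := by
    intro i y
    apply hb_ext e
    intro x
    have lhs : ⟪e x, ContinuousLinearMap.adjoint (T i) (e y)⟫ = ⟪T i (e x), e y⟫ := by
      rw [ContinuousLinearMap.adjoint_inner_right]
    rw [lhs, hT i x]
    by_cases hc : c x = i
    · simp only [hc, if_true]
      rw [hinner]
      by_cases h : ∃ z, c z = i ∧ f z = y
      · obtain ⟨hcz, hfz⟩ := h.choose_spec
        rw [dif_pos h, hinner]
        by_cases hxy : f x = y
        · have : x = h.choose := hpart i hc hcz (by rw [hxy, hfz])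
          simp [hxy, this, hfz]
        · have : x ≠ h.choose := by
            rintro rfl; exact hxy hfz
          simp [hxy, this, hfz]
      · have hxy : f x ≠ y := fun hxy => h ⟨x, hc, hxy⟩
        rw [dif_neg h, inner_zero_right]
        simp [hxy]
    · simp only [hc, if_false, inner_zero_left]
      by_cases h : ∃ z, c z = i ∧ f z = y
      · obtain ⟨hcz, hfz⟩ := h.choose_spec
        rw [dif_pos h, hinner]
        have : x ≠ h.choose := by rintro rfl; exact hc hcz
        simp [this]
      · rw [dif_neg h, inner_zero_right]
  refine ⟨?_, ?_, ?_⟩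
  · intro K hKf hKp i v hv
    constructor
    · refine maps_closure e K (T i) ?_ hv
      intro x hx
      rw [hT i x]
      by_cases hc : c x = i
      · simp only [hc, if_true]
        exact hmem K _ (hKf ⟨x, hx, rfl⟩)
      · simp only [hc, if_false]
        exact Submodule.zero_mem _
    · refine maps_closure e K (ContinuousLinearMap.adjoint (T i)) ?_ hv
      intro y hy
      rw [hadj i y]
      by_cases h : ∃ z, c z = i ∧ f z = y
      · obtain ⟨hcz, hfz⟩ := h.choose_spec
        rw [dif_pos h]
        exact hmem K _ (hKp (show f h.choose ∈ K by rw [hfz]; exact hy))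
      · rw [dif_neg h]
        exact Submodule.zero_mem _
  · intro K K' _ _ _ _ hMM
    have key : ∀ (A B : Set X),
        (Submodule.span ℂ (⇑e '' A)).topologicalClosure =
          (Submodule.span ℂ (⇑e '' B)).topologicalClosure → A ⊆ B := by
      intro A B hAB x hx
      by_contra hxB
      have h1 : e x ∈ (Submodule.span ℂ (⇑e '' B)).topologicalClosure := by
        rw [← hAB]; exact hmem A x hx
      have h2 : e x ∈ (Submodule.span ℂ (⇑e '' B))ᗮ := by
        rw [Submodule.mem_orthogonal]
        intro u hu
        refine Submodule.span_induction ?_ ?_ ?_ ?_ hu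
        · rintro _ ⟨y, hy, rfl⟩
          rw [hinner]
          have : y ≠ x := fun h => hxB (h ▸ hy)
          simp [this]
        · exact inner_zero_left _
        · intro a b _ _ ha hb; rw [inner_add_left, ha, hb, add_zero]
        · intro r a _ ha; rw [inner_smul_left, ha, mul_zero]
      have h1' : e x ∈ (Submodule.span ℂ (⇑e '' B))ᗮᗮ := by
        rwa [Submodule.orthogonal_orthogonal_eq_closure]
      have := Submodule.orthogonal_disjoint (Submodule.span ℂ (⇑e '' B))ᗮ
      have hx0 : e x = 0 := by
        have := this.le_bot ⟨h2, h1'⟩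
        simpa using this
      have := horth.ne_zero x
      exact this hx0
    exact Set.Subset.antisymm (key K K' hMM) (key K' K hMM.symm)
  · intro K K' hKK'
    exact Submodule.topologicalClosure_mono
      (Submodule.span_mono (Set.image_mono hKK'))
end

section
/- Assume f satisfies the totally uniqueness condition. Then every reducing subspace M for the operators T₁,…,T_k and their adjoints is of the form closure span{e_x : x ∈ K} for the f-invariant set K = {x ∈ X : ⟨a, e_x⟩ ≠ 0 for some a ∈ M}; hence K ↦ H_K is a bijection between f-invariant sets and reducing subspaces. -/
theorem stmt_17 {X : Type*} [Countable X] {k : ℕ} (f : X → X) (c : X → Fin k)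
    (hpart : ∀ i : Fin k, Set.InjOn f {x | c x = i})
    (htu : ∀ x y : X, (∀ j : ℕ, c (f^[j] x) = c (f^[j] y)) → x = y)
    {H : Type*} [NormedAddCommGroup H] [InnerProductSpace ℂ H] [CompleteSpace H]
    (e : HilbertBasis X ℂ H) (T : Fin k → H →L[ℂ] H)
    (hT : ∀ i x, T i (e x) = if c x = i then e (f x) else 0)
    (M : Submodule ℂ H) (hMc : IsClosed (M : Set H))
    (hred : ∀ i : Fin k, ∀ v ∈ M, T i v ∈ M ∧ ContinuousLinearMap.adjoint (T i) v ∈ M) :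
    (f '' {x : X | ∃ a ∈ M, (inner ℂ a (e x) : ℂ) ≠ 0} ⊆ {x : X | ∃ a ∈ M, (inner ℂ a (e x) : ℂ) ≠ 0}) ∧
    (f ⁻¹' {x : X | ∃ a ∈ M, (inner ℂ a (e x) : ℂ) ≠ 0} ⊆ {x : X | ∃ a ∈ M, (inner ℂ a (e x) : ℂ) ≠ 0}) ∧
    M = (Submodule.span ℂ (⇑e '' {x : X | ∃ a ∈ M, (inner ℂ a (e x) : ℂ) ≠ 0})).topologicalClosure := by
  classical
  set K : Set X := {x : X | ∃ a ∈ M, (inner ℂ a (e x) : ℂ) ≠ 0} with hKdef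
  have hortho : ∀ z y : X, (inner ℂ (e z) (e y) : ℂ) = if z = y then 1 else 0 :=
    orthonormal_iff_ite.mp e.orthonormal
  have hext : ∀ u v : H, (∀ z : X, (inner ℂ (e z) u : ℂ) = inner ℂ (e z) v) → u = v := by
    intro u v h
    have : e.repr u = e.repr v := by
      ext z
      rw [e.repr_apply_apply, e.repr_apply_apply]
      exact h z
    exact e.repr.injective this
  have hadj : ∀ x : X, ContinuousLinearMap.adjoint (T (c x)) (e (f x)) = e x := by
    intro x
    apply hext
    intro z
    rw [ContinuousLinearMap.adjoint_inner_right, hT, hortho]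
    by_cases hz : c z = c x
    · rw [if_pos hz, hortho]
      by_cases hfz : f z = f x
      · rw [if_pos hfz, if_pos (hpart (c x) hz rfl hfz)]
      · rw [if_neg hfz, if_neg (fun h => hfz (by rw [h]))]
    · rw [if_neg hz, if_neg (fun h => hz (by rw [h]))]
      simp
  have hKf : f '' K ⊆ K := by
    rintro _ ⟨x, ⟨a, haM, ha⟩, rfl⟩
    refine ⟨T (c x) a, (hred (c x) a haM).1, ?_⟩
    rw [← ContinuousLinearMap.adjoint_inner_right, hadj]
    exact ha
  have hKfinv : f ⁻¹' K ⊆ K := by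
    rintro x ⟨a, haM, ha⟩
    refine ⟨ContinuousLinearMap.adjoint (T (c x)) a, (hred (c x) a haM).2, ?_⟩
    rw [ContinuousLinearMap.adjoint_inner_left, hT, if_pos rfl]
    exact ha
  set q : ℕ → X → H → H := fun n => Nat.rec (motive := fun _ => X → H → H)
      (fun _ a => a)
      (fun _ ih x a => ContinuousLinearMap.adjoint (T (c x)) (ih (f x) (T (c x) a))) n with hq
  have q_zero : ∀ x a, q 0 x a = a := fun _ _ => rfl
  have q_succ : ∀ n x a, q (n+1) x a
      = ContinuousLinearMap.adjoint (T (c x)) (q n (f x) (T (c x) a)) := fun _ _ _ => rfl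
  have q_mem : ∀ n x, ∀ a ∈ M, q n x a ∈ M := by
    intro n
    induction n with
    | zero => intro x a ha; simpa [q_zero] using ha
    | succ n ih =>
      intro x a ha
      rw [q_succ]
      exact (hred _ _ (ih (f x) _ ((hred (c x) a ha).1))).2
  have q_coef : ∀ n x a y, (inner ℂ (e y) (q n x a) : ℂ) =
      if ∀ j < n, c (f^[j] y) = c (f^[j] x) then inner ℂ (e y) a else 0 := by
    intro n
    induction n with
    | zero => intro x a y; simp [q_zero]
    | succ n ih =>
      intro x a y
      rw [q_succ, ContinuousLinearMap.adjoint_inner_right, hT]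
      by_cases h0 : c y = c x
      · rw [if_pos h0, ih]
        have hval : (inner ℂ (e (f y)) (T (c x) a) : ℂ) = inner ℂ (e y) a := by
          rw [← h0, ← hadj y, ContinuousLinearMap.adjoint_inner_left]
        by_cases h1 : ∀ j < n, c (f^[j] (f y)) = c (f^[j] (f x))
        · rw [if_pos h1, if_pos, hval]
          intro j hj
          cases j with
          | zero => simpa using h0
          | succ j =>
            have := h1 j (Nat.lt_of_succ_lt_succ hj)
            simpa [Function.iterate_succ_apply] using this
        · rw [if_neg h1, if_neg]
          intro hall
          apply h1
          intro j hj
          have := hall (j+1) (Nat.succ_lt_succ hj)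
          simpa [Function.iterate_succ_apply] using this
      · rw [if_neg h0, if_neg]
        · simp
        · intro hall
          exact h0 (by simpa using hall 0 (Nat.succ_pos n))
  have hPars : ∀ w : H, HasSum (fun y => ‖(inner ℂ (e y) w : ℂ)‖^2) (‖w‖^2) := by
    intro w
    have h := e.hasSum_inner_mul_inner w w
    have h2 := Complex.reCLM.hasSum h
    have hterm : ∀ y : X, Complex.reCLM ((inner ℂ w (e y) : ℂ) * inner ℂ (e y) w)
        = ‖(inner ℂ (e y) w : ℂ)‖^2 := by
      intro y
      rw [← inner_conj_symm w (e y), mul_comm, Complex.mul_conj', Complex.reCLM_apply,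
        ← Complex.ofReal_pow, Complex.ofReal_re]
    have hval : Complex.reCLM (inner ℂ w w : ℂ) = ‖w‖ ^ 2 := by
      have := inner_self_eq_norm_sq (𝕜 := ℂ) w
      simpa using this
    simpa only [hterm, hval] using h2
  have hKe : ∀ x ∈ K, e x ∈ M := by
    rintro x ⟨a, haM, ha⟩
    set α : ℂ := inner ℂ (e x) a with hα
    have hconj : (inner ℂ a (e x) : ℂ) = starRingEnd ℂ α := by
      rw [hα]
      exact (inner_conj_symm a (e x)).symm
    have hα0 : α ≠ 0 := by
      intro h
      apply ha
      rw [hconj, h, map_zero]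
    have hmem : α • e x ∈ M := by
      have hclos : (α • e x) ∈ closure (M : Set H) := by
        rw [Metric.mem_closure_iff]
        intro ε hε
        have hga := hPars a
        have hsumg : Summable (fun y => ‖(inner ℂ (e y) a : ℂ)‖^2) := hga.summable
        have htend := tendsto_tsum_compl_atTop_zero (fun y => ‖(inner ℂ (e y) a : ℂ)‖^2)
        obtain ⟨F, hF⟩ := ((tendsto_order.1 htend).2 (ε^2) (by positivity)).exists
        set J : X → ℕ := fun y => if h : ∃ j, c (f^[j] y) ≠ c (f^[j] x) then Nat.find h else 0
          with hJ
        set N : ℕ := (F.sup J) + 1 with hN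
        refine ⟨q N x a, q_mem N x a haM, ?_⟩
        set w : H := q N x a - α • e x with hw
        have hcoefw : ∀ y : X, (inner ℂ (e y) w : ℂ) =
            if y ≠ x ∧ ∀ j < N, c (f^[j] y) = c (f^[j] x) then inner ℂ (e y) a else 0 := by
          intro y
          rw [hw, inner_sub_right, inner_smul_right, q_coef N x a y, hortho y x]
          by_cases hyx : y = x
          · subst hyx
            rw [if_pos (fun j _ => rfl), if_pos rfl, if_neg (by simp), mul_one, hα, sub_self]
          · rw [if_neg hyx, mul_zero, sub_zero]
            by_cases hcond : ∀ j < N, c (f^[j] y) = c (f^[j] x)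
            · rw [if_pos hcond, if_pos ⟨hyx, hcond⟩]
            · rw [if_neg hcond, if_neg (fun hc => hcond hc.2)]
        have hw2 := hPars w
        have hbound : ∀ y : X, ‖(inner ℂ (e y) w : ℂ)‖^2 ≤
            Set.indicator {z : X | z ∉ F} (fun y => ‖(inner ℂ (e y) a : ℂ)‖^2) y := by
          intro y
          by_cases hyF : y ∈ F
          · have hzero : (inner ℂ (e y) w : ℂ) = 0 := by
              rw [hcoefw]
              apply if_neg
              rintro ⟨hyx, hcond⟩
              have hex : ∃ j, c (f^[j] y) ≠ c (f^[j] x) := by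
                by_contra hno
                push_neg at hno
                exact hyx (htu y x hno)
              have hJy : J y = Nat.find hex := by rw [hJ]; simp only [dif_pos hex]
              have hlt : J y < N := Nat.lt_succ_of_le (Finset.le_sup hyF)
              have := hcond (J y) hlt
              rw [hJy] at this
              exact Nat.find_spec hex this
            rw [hzero]
            simp only [norm_zero]
            rw [zero_pow (by norm_num)]
            exact Set.indicator_nonneg (fun z _ => by positivity) y
          · rw [Set.indicator_of_mem (by exact hyF), hcoefw]
            split
            · exact le_refl _
            · simp only [norm_zero]
              rw [zero_pow (by norm_num)]
              positivity
        have hle : ‖w‖^2 < ε^2 := by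
          calc ‖w‖^2 = ∑' y, ‖(inner ℂ (e y) w : ℂ)‖^2 := hw2.tsum_eq.symm
            _ ≤ ∑' y, Set.indicator {z : X | z ∉ F}
                  (fun y => ‖(inner ℂ (e y) a : ℂ)‖^2) y :=
                Summable.tsum_le_tsum hbound hw2.summable (hsumg.indicator _)
            _ = ∑' y : {z : X // z ∉ F}, ‖(inner ℂ (e (↑y)) a : ℂ)‖^2 :=
                (tsum_subtype {z : X | z ∉ F} _).symm
            _ < ε^2 := hF
        have hwn : ‖w‖ < ε := lt_of_pow_lt_pow_left₀ 2 hε.le hle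
        rw [dist_eq_norm]
        calc ‖α • e x - q N x a‖ = ‖w‖ := by rw [hw, norm_sub_rev]
          _ < ε := hwn
      rw [← SetLike.mem_coe, ← hMc.closure_eq]
      exact hclos
    have := M.smul_mem α⁻¹ hmem
    rwa [smul_smul, inv_mul_cancel₀ hα0, one_smul] at this
  refine ⟨hKf, hKfinv, le_antisymm ?_ ?_⟩
  · intro a ha
    rw [← SetLike.mem_coe, Submodule.topologicalClosure_coe]
    have hsum := e.hasSum_repr a
    refine mem_closure_of_tendsto hsum (Filter.Eventually.of_forall fun s => ?_)
    rw [SetLike.mem_coe]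
    refine Submodule.sum_mem _ fun y _ => ?_
    by_cases hy : (e.repr a) y = 0
    · rw [hy, zero_smul]
      exact Submodule.zero_mem _
    · refine Submodule.smul_mem _ _ (Submodule.subset_span ⟨y, ⟨a, ha, ?_⟩, rfl⟩)
      intro h0
      apply hy
      rw [e.repr_apply_apply]
      have := congrArg (starRingEnd ℂ) h0
      rwa [inner_conj_symm, map_zero] at this
  · exact Submodule.topologicalClosure_minimal _
      (Submodule.span_le.mpr (by rintro _ ⟨y, hy, rfl⟩; exact hKe y hy)) hMc
end
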